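/- For all integers m ≥ 0 and 0 ≤ i ≤ m+1, the Boros-Moll coefficients satisfy (m+2-i)(m+i-1) · d_{i-2}(m) − (i-1)(2m+1) · d_{i-1}(m) + i(i-1) · d_i(m) = 0, with the convention d_j(m) = 0 for j < 0 or j > m. -/

import Mathlib

open Finset

noncomputable def d (m : ℕ) (i : ℤ) : ℝ :=
  if 0 ≤ i ∧ i ≤ (m : ℤ) then
    ((2 : ℝ) ^ (2 * m))⁻¹ *
      ∑ k ∈ Finset.Icc i.toNat m,
        2 ^ k * (Nat.choose (2 * m - 2 * k) (m - k) : ℝ) *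
          (Nat.choose (m + k) k : ℝ) * (Nat.choose k i.toNat : ℝ)
  else 0

lemma bm_central (t : ℕ) : (t+1) * Nat.choose (2*t+2) (t+1) = 2*(2*t+1) * Nat.choose (2*t) t := by
  have h1 := Nat.add_one_mul_choose_eq (2*t+1) t
  have h2 := Nat.add_one_mul_choose_eq (2*t) t
  have h3 : Nat.choose (2*t+1) (t+1) = Nat.choose (2*t+1) t := by
    rw [← Nat.choose_symm (by omega)]; congr 1; omega
  rw [h3] at h2
  rw [show 2*t+2 = (2*t+1)+1 from by omega]
  nlinarith [h1, h2]

lemma bm_shift (k j : ℕ) : (k+1) * Nat.choose k j = (k+1-j) * Nat.choose (k+1) j := by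
  have h1 := Nat.add_one_mul_choose_eq k j
  have h2 := Nat.choose_succ_right_eq (k+1) j
  rw [h1, h2, Nat.mul_comm]

lemma bm_key (m j k t : ℕ) (hjk : j ≤ k) (hm : m = k + t + 1) :
    (2^k * (Nat.choose (2*m-2*k) (m-k) : ℝ) * (Nat.choose (m+k) k : ℝ) * (Nat.choose k j : ℝ)) *
      (((k:ℝ)-j)^2 - (2*(m:ℝ)+2)*((k:ℝ)-j) + ((m:ℝ)-j)*((m:ℝ)+j+1))
    = (2^k * (Nat.choose (2*m-2*k) (m-k) : ℝ) * (Nat.choose (m+k) k : ℝ) * (Nat.choose k j : ℝ)) *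
        (((k:ℝ)-j)*(2*(k:ℝ)-2*m-1))
      - (2^(k+1) * (Nat.choose (2*m-2*(k+1)) (m-(k+1)) : ℝ) * (Nat.choose (m+(k+1)) (k+1) : ℝ) *
          (Nat.choose (k+1) j : ℝ)) * (((k:ℝ)+1-j)*(2*((k:ℝ)+1)-2*m-1)) := by
  subst hm
  simp only [show 2*(k+t+1)-2*k = 2*t+2 from by omega, show (k+t+1)-k = t+1 from by omega,
    show 2*(k+t+1)-2*(k+1) = 2*t from by omega, show (k+t+1)-(k+1) = t from by omega,
    show (k+t+1)+k = 2*k+t+1 from by omega, show (k+t+1)+(k+1) = 2*k+t+2 from by omega]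
  have r1 : ((t:ℝ)+1) * (Nat.choose (2*t+2) (t+1) : ℝ) = 2*(2*(t:ℝ)+1) * (Nat.choose (2*t) t : ℝ) := by
    exact_mod_cast congrArg (Nat.cast : ℕ → ℝ) (bm_central t)
  have r2 : ((2*(k:ℝ)+t+2)) * (Nat.choose (2*k+t+1) k : ℝ) = ((k:ℝ)+1) * (Nat.choose (2*k+t+2) (k+1) : ℝ) := by
    have := Nat.add_one_mul_choose_eq (2*k+t+1) k
    have : ((2*k+t+1+1 : ℕ) : ℝ) * (Nat.choose (2*k+t+1) k : ℝ)
        = (Nat.choose (2*k+t+1+1) (k+1) : ℝ) * ((k+1 : ℕ) : ℝ) := by exact_mod_cast congrArg Nat.cast this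
    push_cast at this
    linarith [this]
  have r3 : ((k:ℝ)+1) * (Nat.choose k j : ℝ) = ((k:ℝ)+1-j) * (Nat.choose (k+1) j : ℝ) := by
    have h := congrArg (Nat.cast : ℕ → ℝ) (bm_shift k j)
    push_cast [Nat.cast_sub (show j ≤ k+1 by omega)] at h
    linarith [h]
  have h12 : (((t:ℝ)+1) * (Nat.choose (2*t+2) (t+1) : ℝ)) *
      (((2*(k:ℝ)+t+2)) * (Nat.choose (2*k+t+1) k : ℝ)) *
      (((k:ℝ)+1) * (Nat.choose k j : ℝ))
      = (2*(2*(t:ℝ)+1) * (Nat.choose (2*t) t : ℝ)) *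
        (((k:ℝ)+1) * (Nat.choose (2*k+t+2) (k+1) : ℝ)) *
        (((k:ℝ)+1-j) * (Nat.choose (k+1) j : ℝ)) := by
    rw [r1, r2, r3]
  push_cast
  refine mul_left_cancel₀ (show ((k:ℝ)+1) ≠ 0 by positivity) ?_
  linear_combination (2:ℝ)^k * h12

lemma bm_tele (f : ℕ → ℝ) (a : ℕ) : ∀ b, a ≤ b →
    ∑ k ∈ Icc a b, (f k - f (k+1)) = f a - f (b+1) := by
  intro b hb
  induction b, hb using Nat.le_induction with
  | base => simp
  | succ n hn ih =>
      rw [Finset.sum_Icc_succ_top (by omega), ih]; ring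

lemma bm_h1 (k j : ℕ) (hjk : j ≤ k) :
    ((j:ℝ)+1) * (Nat.choose k (j+1) : ℝ) = ((k:ℝ)-j) * (Nat.choose k j : ℝ) := by
  have h := congrArg (Nat.cast : ℕ → ℝ) (Nat.choose_succ_right_eq k j)
  push_cast [Nat.cast_sub hjk] at h
  linarith [h]

lemma bm_h2 (k j : ℕ) (hjk : j ≤ k) :
    ((j:ℝ)+2) * ((j:ℝ)+1) * (Nat.choose k (j+2) : ℝ)
      = ((k:ℝ)-j-1) * (((k:ℝ)-j) * (Nat.choose k j : ℝ)) := by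
  rcases Nat.lt_or_ge k (j+2) with h | h
  · rw [Nat.choose_eq_zero_of_lt h]
    have : k = j ∨ k = j + 1 := by omega
    rcases this with h' | h' <;> subst h' <;> push_cast <;> ring
  · have h1 := bm_h1 k j hjk
    have h2 : ((j:ℝ)+2) * (Nat.choose k (j+2) : ℝ) = ((k:ℝ)-(j+1)) * (Nat.choose k (j+1) : ℝ) := by
      have h := congrArg (Nat.cast : ℕ → ℝ) (Nat.choose_succ_right_eq k (j+1))
      push_cast [Nat.cast_sub (show j+1 ≤ k by omega)] at h
      linarith [h]
    linear_combination ((j:ℝ)+1) * h2 + ((k:ℝ)-j-1) * h1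

lemma bm_dsum (m j n : ℕ) (hjn : j ≤ n) :
    d m (n : ℤ) = ((2 : ℝ) ^ (2 * m))⁻¹ *
      ∑ k ∈ Icc j m, 2 ^ k * (Nat.choose (2 * m - 2 * k) (m - k) : ℝ) *
          (Nat.choose (m + k) k : ℝ) * (Nat.choose k n : ℝ) := by
  by_cases hn : n ≤ m
  · rw [d, if_pos ⟨by positivity, by exact_mod_cast hn⟩]
    congr 1
    rw [Int.toNat_natCast]
    refine (Finset.sum_subset ?_ ?_)
    · intro x hx; simp only [mem_Icc] at *; omega
    · intro x hx hx'
      simp only [mem_Icc] at hx hx'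
      have : x < n := by omega
      simp [Nat.choose_eq_zero_of_lt this]
  · rw [d, if_neg (by omega)]
    have : ∀ k ∈ Icc j m, 2 ^ k * (Nat.choose (2 * m - 2 * k) (m - k) : ℝ) *
          (Nat.choose (m + k) k : ℝ) * (Nat.choose k n : ℝ) = 0 := by
      intro k hk
      simp only [mem_Icc] at hk
      simp [Nat.choose_eq_zero_of_lt (show k < n by omega)]
    rw [Finset.sum_congr rfl this]
    simp

theorem boros_moll_recu4 (m : ℕ) (i : ℤ) (h0 : 0 ≤ i) (h1 : i ≤ (m : ℤ) + 1) :
    ((m + 2 - i) * (m + i - 1) : ℝ) * d m (i - 2)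
      - ((i - 1) * (2 * m + 1) : ℝ) * d m (i - 1)
      + (i * (i - 1) : ℝ) * d m i = 0 := by
  rcases eq_or_lt_of_le h0 with h | h
  · -- i = 0
    have hi : i = 0 := h.symm
    subst hi
    have hd2 : d m (0 - 2) = 0 := by rw [d, if_neg]; norm_num
    have hd1 : d m (0 - 1) = 0 := by rw [d, if_neg]; norm_num
    rw [hd2, hd1]; norm_num
  rcases eq_or_lt_of_le (show (1:ℤ) ≤ i by omega) with h' | h'
  · -- i = 1
    have hi : i = 1 := h'.symm
    subst hi
    have hd2 : d m (1 - 2) = 0 := by rw [d, if_neg]; norm_num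
    rw [hd2]; norm_num
  -- main case : i = j + 2
  obtain ⟨j, hj⟩ : ∃ j : ℕ, i = (j : ℤ) + 2 := ⟨(i - 2).toNat, by omega⟩
  subst hj
  have hjm : j < m := by omega
  have e2 : (j : ℤ) + 2 - 2 = ((j : ℕ) : ℤ) := by ring
  have e1 : (j : ℤ) + 2 - 1 = ((j + 1 : ℕ) : ℤ) := by push_cast; ring
  have e0 : (j : ℤ) + 2 = ((j + 2 : ℕ) : ℤ) := by push_cast; ring
  rw [e2, e1, e0, bm_dsum m j j le_rfl, bm_dsum m j (j+1) (by omega), bm_dsum m j (j+2) (by omega)]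
  -- abbreviations
  set c : ℝ := ((2 : ℝ) ^ (2 * m))⁻¹ with hc
  set A : ℕ → ℝ := fun k => 2 ^ k * (Nat.choose (2 * m - 2 * k) (m - k) : ℝ) *
          (Nat.choose (m + k) k : ℝ) with hA
  have key : ∑ k ∈ Icc j m,
      ( ((m:ℝ)-j)*((m:ℝ)+j+1) * (A k * (Nat.choose k j : ℝ))
        - ((j:ℝ)+1)*(2*(m:ℝ)+1) * (A k * (Nat.choose k (j+1) : ℝ))
        + ((j:ℝ)+2)*((j:ℝ)+1) * (A k * (Nat.choose k (j+2) : ℝ)) ) = 0 := by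
    set G : ℕ → ℝ := fun k => if k ≤ m then
      (A k * (Nat.choose k j : ℝ)) * (((k:ℝ)-j)*(2*(k:ℝ)-2*(m:ℝ)-1)) else 0 with hG
    have step : ∀ k ∈ Icc j m,
        ( ((m:ℝ)-j)*((m:ℝ)+j+1) * (A k * (Nat.choose k j : ℝ))
          - ((j:ℝ)+1)*(2*(m:ℝ)+1) * (A k * (Nat.choose k (j+1) : ℝ))
          + ((j:ℝ)+2)*((j:ℝ)+1) * (A k * (Nat.choose k (j+2) : ℝ)) )
        = G k - G (k+1) := by
      intro k hk
      simp only [mem_Icc] at hk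
      obtain ⟨hjk, hkm⟩ := hk
      have hb : ( ((m:ℝ)-j)*((m:ℝ)+j+1) * (A k * (Nat.choose k j : ℝ))
          - ((j:ℝ)+1)*(2*(m:ℝ)+1) * (A k * (Nat.choose k (j+1) : ℝ))
          + ((j:ℝ)+2)*((j:ℝ)+1) * (A k * (Nat.choose k (j+2) : ℝ)) )
          = (A k * (Nat.choose k j : ℝ)) *
            (((k:ℝ)-j)^2 - (2*(m:ℝ)+2)*((k:ℝ)-j) + ((m:ℝ)-j)*((m:ℝ)+j+1)) := by
        have h1 := bm_h1 k j hjk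
        have h2 := bm_h2 k j hjk
        linear_combination (-(2*(m:ℝ)+1) * A k) * h1 + (A k) * h2
      rw [hb]
      rcases Nat.eq_or_lt_of_le hkm with hkm' | hkm'
      · -- k = m
        subst hkm'
        rw [hG]
        simp only [le_refl, if_pos, if_neg (show ¬ (k+1 ≤ k) by omega)]
        ring
      · -- k < m
        obtain ⟨t, ht⟩ : ∃ t, m = k + t + 1 := ⟨m - k - 1, by omega⟩
        rw [hG]
        simp only [if_pos (show k ≤ m by omega), if_pos (show k+1 ≤ m by omega)]
        have := bm_key m j k t hjk ht
        rw [hA]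
        push_cast
        push_cast at this
        linear_combination this
    rw [Finset.sum_congr rfl step, bm_tele G j m (by omega)]
    have gj : G j = 0 := by
      rw [hG]; simp only [if_pos (show j ≤ m by omega)]
      simp
    have gm : G (m+1) = 0 := by
      rw [hG]; simp only [if_neg (show ¬ (m+1 ≤ m) by omega)]
    rw [gj, gm]; ring
  have final : c * (∑ k ∈ Icc j m,
      ( ((m:ℝ)-j)*((m:ℝ)+j+1) * (A k * (Nat.choose k j : ℝ))
        - ((j:ℝ)+1)*(2*(m:ℝ)+1) * (A k * (Nat.choose k (j+1) : ℝ))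
        + ((j:ℝ)+2)*((j:ℝ)+1) * (A k * (Nat.choose k (j+2) : ℝ)) )) = 0 := by
    rw [key]; ring
  refine Eq.trans ?_ final
  rw [Finset.sum_add_distrib, Finset.sum_sub_distrib, ← Finset.mul_sum, ← Finset.mul_sum,
    ← Finset.mul_sum]
  push_cast
  ring
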